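/- Let G be a locally compact group, 𝒜 a unital left-translation-invariant C*-subalgebra of LUC(G), U an open neighbourhood of e, and T a right U-uniformly discrete 𝒜-set. Then for each open neighbourhood V of e with closure(V) ⊆ U, the natural map (v, x) ↦ ε(v)x from V × closure(ε(T)) onto ε(V)·closure(ε(T)) ⊆ G^𝒜 is a homeomorphism, and closure(ε(T)) is homeomorphic to the Stone–Čech compactification βT of the discrete set T. -/

import Mathlib

open Pointwise

/-- An abstract model of the compactification `G^𝒜` associated to a unital
left-translation-invariant C*-subalgebra `A` of `CB(G)`: a compact Hausdorff space `X` together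
with the (dense-range) evaluation map `ε : G → X`, the natural left action of `G` on `X`
(`(ε(s)x)(f) = x(ₛf)`), and the Gelfand correspondence identifying `A` with `C(X)`. -/
structure GCompactification (G : Type*) [TopologicalSpace G] [Group G]
    (A : Set (G → ℂ)) (X : Type*) [TopologicalSpace X] [CompactSpace X] [T2Space X] where
  eps : G → X
  dense : DenseRange eps
  act : G → X → X
  act_eps : ∀ s t : G, act s (eps t) = eps (s * t)
  act_mul : ∀ s t : G, ∀ x : X, act (s * t) x = act s (act t x)
  act_cont : ∀ s : G, Continuous (act s)
  gelfand : (G → ℂ) → (X → ℂ)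
  gelfand_cont : ∀ f ∈ A, Continuous (gelfand f)
  gelfand_eps : ∀ f ∈ A, ∀ s : G, gelfand f (eps s) = f s
  mem_of_cont : ∀ φ : X → ℂ, Continuous φ → (fun s => φ (eps s)) ∈ A

/-- The semigroup compactification `G^𝒜` of an admissible subalgebra `A`: additionally `X` carries
an associative multiplication which is right topological, extends that of `G`, and restricts to
the action of `G`. -/
structure GSemigroupCompactification (G : Type*) [TopologicalSpace G] [Group G]
    (A : Set (G → ℂ)) (X : Type*) [TopologicalSpace X] [CompactSpace X] [T2Space X]
    extends GCompactification G A X where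
  mul : X → X → X
  mul_assoc : ∀ x y z : X, mul (mul x y) z = mul x (mul y z)
  right_cont : ∀ y : X, Continuous fun x => mul x y
  eps_act : ∀ (s : G) (x : X), mul (eps s) x = act s x

/-- `T` is an `𝒜`-set: for every open neighbourhood `U` of `e` there is an open neighbourhood `V`
of `e` with `closure V ⊆ U` such that for each `T₁ ⊆ T` some `h ∈ A` is `1` on `VT₁` and `0` off
`UT₁`. -/
def IsASet {G : Type*} [TopologicalSpace G] [Group G] (A : Set (G → ℂ)) (T : Set G) : Prop :=
  ∀ U : Set G, IsOpen U → (1 : G) ∈ U →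
    ∃ V : Set G, IsOpen V ∧ (1 : G) ∈ V ∧ closure V ⊆ U ∧
      ∀ T₁ ⊆ T, ∃ h ∈ A, (∀ x ∈ V * T₁, h x = 1) ∧ (∀ x ∉ U * T₁, h x = 0)

/-- Right translation-compact subsets of a topological group. -/
def RightTranslationCompact {G : Type*} [Group G] [TopologicalSpace G] (T : Set G) : Prop :=
  ∀ L : Set G, ¬ IsCompact (closure L) →
    ∃ F : Set G, F ⊆ L ∧ F.Finite ∧ IsCompact (closure (⋂ b ∈ F, (b * ·) ⁻¹' T))

/-- A copy of the set `T` carrying the discrete topology. -/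
def DiscreteCopy {G : Type*} (T : Set G) : Type _ := T

instance {G : Type*} (T : Set G) : TopologicalSpace (DiscreteCopy T) := ⊥

/-- The underlying group element of a point of `DiscreteCopy T`. -/
def DiscreteCopy.elem {G : Type*} {T : Set G} (x : DiscreteCopy T) : G := Subtype.val x

set_option linter.unusedSectionVars false

section Aux

variable {G : Type*} [TopologicalSpace G] [Group G] [IsTopologicalGroup G] [T2Space G]
    {A : Set (G → ℂ)} {X : Type*} [TopologicalSpace X] [CompactSpace X] [T2Space X]
    (C : GCompactification G A X)

theorem GComp.act_one : ∀ x : X, C.act 1 x = x := by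
  have h := C.dense.equalizer (C.act_cont 1) continuous_id
    (funext fun t => by simp [C.act_eps 1 t])
  exact fun x => congrFun h x

theorem GComp.eps_cont (hjc : Continuous fun p : G × X => C.act p.1 p.2) :
    Continuous C.eps := by
  have : C.eps = fun s => C.act s (C.eps 1) := by
    funext s; rw [C.act_eps s 1, mul_one]
  rw [this]
  exact hjc.comp (continuous_id.prodMk continuous_const)

/-- The separating function associated to a subset `T₁ ⊆ T`. -/
theorem GComp.sep {U : Set G} (hUopen : IsOpen U) (hU1 : (1 : G) ∈ U) {T : Set G}
    (hdisc : ∀ t ∈ T, ∀ t' ∈ T, t ≠ t' → Disjoint (U * ({t} : Set G)) (U * ({t'} : Set G)))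
    (hAset : IsASet A T) {T₁ : Set G} (hT₁ : T₁ ⊆ T) :
    ∃ H : X → ℂ, Continuous H ∧ (∀ z ∈ closure (C.eps '' T₁), H z = 1) ∧
      (∀ z ∈ closure (C.eps '' (T \ T₁)), H z = 0) := by
  obtain ⟨V₀, hV₀o, hV₀1, _, hfun⟩ := hAset U hUopen hU1
  obtain ⟨h, hA, h1, h0⟩ := hfun T₁ hT₁
  refine ⟨C.gelfand h, C.gelfand_cont h hA, ?_, ?_⟩
  · refine fun z hz => closure_minimal ?_
      (isClosed_eq (C.gelfand_cont h hA) continuous_const) hz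
    rintro _ ⟨t, ht, rfl⟩
    show C.gelfand h (C.eps t) = 1
    rw [C.gelfand_eps h hA t]
    have : t ∈ V₀ * T₁ := by
      have := Set.mul_mem_mul hV₀1 ht
      rwa [one_mul] at this
    exact h1 t this
  · refine fun z hz => closure_minimal ?_
      (isClosed_eq (C.gelfand_cont h hA) continuous_const) hz
    rintro _ ⟨t', ht', rfl⟩
    show C.gelfand h (C.eps t') = 0
    rw [C.gelfand_eps h hA t']
    refine h0 t' fun hmem => ?_
    obtain ⟨u, hu, t₁, ht₁, huv⟩ := hmem
    have hne : t' ≠ t₁ := fun hh => ht'.2 (hh ▸ ht₁)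
    have hd := hdisc t' ht'.1 t₁ (hT₁ ht₁) hne
    have hm1 : t' ∈ U * ({t'} : Set G) := by
      have := Set.mul_mem_mul hU1 (Set.mem_singleton t')
      rwa [one_mul] at this
    have hm2 : t' ∈ U * ({t₁} : Set G) := ⟨u, hu, t₁, rfl, huv⟩
    exact Set.disjoint_left.mp hd hm1 hm2

theorem GComp.sep_disjoint {U : Set G} (hUopen : IsOpen U) (hU1 : (1 : G) ∈ U) {T : Set G}
    (hdisc : ∀ t ∈ T, ∀ t' ∈ T, t ≠ t' → Disjoint (U * ({t} : Set G)) (U * ({t'} : Set G)))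
    (hAset : IsASet A T) {T₁ : Set G} (hT₁ : T₁ ⊆ T) :
    Disjoint (closure (C.eps '' T₁)) (closure (C.eps '' (T \ T₁))) := by
  obtain ⟨H, _, H1, H0⟩ := GComp.sep C hUopen hU1 hdisc hAset hT₁
  refine Set.disjoint_left.mpr fun z hz1 hz0 => ?_
  have := H1 z hz1
  rw [H0 z hz0] at this
  exact one_ne_zero this.symm

end Aux

section Aux2

variable {G : Type*} [TopologicalSpace G] [Group G] [IsTopologicalGroup G] [T2Space G]
    {A : Set (G → ℂ)} {X : Type*} [TopologicalSpace X] [CompactSpace X] [T2Space X]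
    (C : GCompactification G A X)

/-- Key injectivity lemma: if `w = a⁻¹b` with `a, b ∈ U` and both `x` and `w·x` lie in
`closure ε(T)`, then `w = 1`. -/
theorem GComp.key {U : Set G} (hUopen : IsOpen U) (hU1 : (1 : G) ∈ U) {T : Set G}
    (hdisc : ∀ t ∈ T, ∀ t' ∈ T, t ≠ t' → Disjoint (U * ({t} : Set G)) (U * ({t'} : Set G)))
    (hAset : IsASet A T) {a b : G} (ha : a ∈ U) (hb : b ∈ U) {x : X}
    (hx : x ∈ closure (C.eps '' T)) (hx' : C.act (a⁻¹ * b) x ∈ closure (C.eps '' T)) :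
    a⁻¹ * b = 1 := by
  set w := a⁻¹ * b with hw
  have hall : ∀ N : Set G, IsOpen N → (1 : G) ∈ N → w ∈ N := by
    intro N hNopen hN1
    set U' := N ∩ U ∩ (fun g => a * g) ⁻¹' U with hU'
    have hU'open : IsOpen U' :=
      (hNopen.inter hUopen).inter (hUopen.preimage (continuous_const.mul continuous_id))
    have hU'1 : (1 : G) ∈ U' := ⟨⟨hN1, hU1⟩, by simpa using ha⟩
    obtain ⟨V₁, hV₁o, hV₁1, _, hfun⟩ := hAset U' hU'open hU'1
    obtain ⟨h, hA, h1, h0⟩ := hfun T subset_rfl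
    set H := C.gelfand h with hH
    have Hc : Continuous H := C.gelfand_cont h hA
    -- H = 1 on closure ε(T)
    have hHK : ∀ z ∈ closure (C.eps '' T), H z = 1 := by
      refine fun z hz => closure_minimal ?_ (isClosed_eq Hc continuous_const) hz
      rintro _ ⟨t, ht, rfl⟩
      show H (C.eps t) = 1
      rw [hH, C.gelfand_eps h hA t]
      refine h1 t ?_
      have := Set.mul_mem_mul hV₁1 ht
      rwa [one_mul] at this
    -- the open set of points where H ∘ act w is non-zero contains x
    have hψc : Continuous fun z => H (C.act w z) := Hc.comp (C.act_cont w)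
    have hψx : H (C.act w x) = 1 := hHK _ hx'
    have hO : IsOpen {z : X | H (C.act w z) ≠ 0} :=
      isOpen_compl_singleton.preimage hψc
    have hxO : x ∈ {z : X | H (C.act w z) ≠ 0} := by
      simp only [Set.mem_setOf_eq, hψx]; exact one_ne_zero
    obtain ⟨z, hzO, t, ht, rfl⟩ :
        ({z : X | H (C.act w z) ≠ 0} ∩ C.eps '' T).Nonempty := by
      obtain ⟨z, h₁, h₂⟩ := mem_closure_iff.mp hx _ hO hxO
      exact ⟨z, h₁, h₂⟩
    -- so h (w * t) ≠ 0, hence w * t ∈ U' * T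
    have hne : h (w * t) ≠ 0 := by
      have : H (C.act w (C.eps t)) = h (w * t) := by
        rw [C.act_eps w t, hH, C.gelfand_eps h hA]
      have hz' : H (C.act w (C.eps t)) ≠ 0 := hzO
      rwa [this] at hz'
    have hmem : w * t ∈ U' * T := by
      by_contra hcon
      exact hne (h0 _ hcon)
    obtain ⟨u', hu', t', ht', heq⟩ := Set.mem_mul.mp hmem
    -- b * t ∈ U t ∩ U t' forces t = t'
    have hbt1 : b * t ∈ U * ({t} : Set G) := Set.mul_mem_mul hb rfl
    have hbt2 : b * t ∈ U * ({t'} : Set G) := by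
      have : b * t = (a * u') * t' := by
        rw [mul_assoc, heq, hw]
        group
      rw [this]
      exact Set.mul_mem_mul hu'.2 rfl
    have htt : t = t' := by
      by_contra hcon
      exact Set.disjoint_left.mp (hdisc t ht t' ht' hcon) hbt1 hbt2
    subst htt
    have : u' = w := mul_right_cancel heq
    rw [← this]
    exact hu'.1.1
  -- conclude w = 1 from T2
  have h1w : (1 : G) ∈ closure ({w} : Set G) := by
    rw [mem_closure_iff]
    exact fun o ho h1o => ⟨w, hall o ho h1o, rfl⟩
  rw [closure_singleton] at h1w
  exact (Set.mem_singleton_iff.mp h1w).symm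

end Aux2

section Aux3

variable {G : Type*} [TopologicalSpace G] [Group G] [IsTopologicalGroup G] [T2Space G]
    [LocallyCompactSpace G]
    {A : Set (G → ℂ)} {X : Type*} [TopologicalSpace X] [CompactSpace X] [T2Space X]
    (C : GCompactification G A X)

/-- Openness lemma: for any open `V'` and any `T₁ ⊆ T`, the set
`ε(V')·closure(ε(T₁))` is open. -/
theorem GComp.open2 (hjc : Continuous fun p : G × X => C.act p.1 p.2)
    (hlinv : ∀ f ∈ A, ∀ s : G, (fun t => f (s * t)) ∈ A)
    {T : Set G} (hAset : IsASet A T) {V' : Set G} (hV' : IsOpen V')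
    {T₁ : Set G} (hT₁ : T₁ ⊆ T) :
    IsOpen (Set.image2 C.act V' (closure (C.eps '' T₁))) := by
  rw [isOpen_iff_forall_mem_open]
  rintro y hy
  obtain ⟨v, hv, x, hx, rfl⟩ := hy
  -- choose a compact neighbourhood M of 1 with v·M ⊆ V'
  have hpre : (fun g => v * g) ⁻¹' V' ∈ nhds (1 : G) :=
    (hV'.preimage (continuous_const.mul continuous_id)).mem_nhds (by simpa using hv)
  obtain ⟨M, hMnhds, hMsub, hMcomp⟩ := local_compact_nhds hpre
  have hintM : IsOpen (interior M) := isOpen_interior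
  have h1M : (1 : G) ∈ interior M := mem_interior_iff_mem_nhds.mpr hMnhds
  obtain ⟨V₂, hV₂o, hV₂1, _, hfun⟩ := hAset (interior M) hintM h1M
  obtain ⟨h, hA, h1, h0⟩ := hfun T₁ hT₁
  have hAv : (fun s => h (v⁻¹ * s)) ∈ A := hlinv h hA v⁻¹
  set H := C.gelfand fun s => h (v⁻¹ * s) with hHdef
  have Hc : Continuous H := C.gelfand_cont _ hAv
  have Heps : ∀ s : G, H (C.eps s) = h (v⁻¹ * s) := fun s => C.gelfand_eps _ hAv s
  set O := {z : X | H z ≠ 0} with hOdef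
  have hOopen : IsOpen O := isOpen_compl_singleton.preimage Hc
  refine ⟨O, ?_, hOopen, ?_⟩
  · -- O ⊆ image2 act V' (closure ε(T₁))
    -- step 1 : O ⊆ closure (ε '' S) where S = v • (interior M * T₁)
    set S := (fun s => v⁻¹ * s) ⁻¹' ((interior M) * T₁) with hSdef
    have hsub1 : O ⊆ closure (C.eps '' S) := by
      intro z hz
      rw [mem_closure_iff]
      intro o ho hzo
      obtain ⟨g, hg⟩ := C.dense.exists_mem_open (ho.inter hOopen) ⟨z, hzo, hz⟩
      refine ⟨C.eps g, hg.1, g, ?_, rfl⟩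
      show v⁻¹ * g ∈ interior M * T₁
      by_contra hcon
      exact hg.2 ((Heps g).trans (h0 _ hcon))
    -- step 2 : closure (ε '' S) ⊆ image2 act (v·M) (closure ε(T₁))
    set M' := (fun g => v * g) '' M with hM'def
    have hM'comp : IsCompact M' := hMcomp.image (continuous_const.mul continuous_id)
    have hK₁comp : IsCompact (closure (C.eps '' T₁)) := isClosed_closure.isCompact
    have himg : C.eps '' S ⊆
        (fun p : G × X => C.act p.1 p.2) '' (M' ×ˢ closure (C.eps '' T₁)) := by
      rintro _ ⟨s, hs, rfl⟩
      obtain ⟨m, hm, t, ht, hmt⟩ := Set.mem_mul.mp hs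
      refine ⟨(v * m, C.eps t), ⟨⟨m, interior_subset hm, rfl⟩,
        subset_closure ⟨t, ht, rfl⟩⟩, ?_⟩
      show C.act (v * m) (C.eps t) = C.eps s
      rw [C.act_eps]
      congr 1
      have : v * (m * t) = s := by
        rw [hmt]; group
      rw [← this]; group
    have hcls : closure (C.eps '' S) ⊆
        (fun p : G × X => C.act p.1 p.2) '' (M' ×ˢ closure (C.eps '' T₁)) := by
      refine closure_minimal himg (((hM'comp.prod hK₁comp).image hjc).isClosed)
    have hfin : (fun p : G × X => C.act p.1 p.2) '' (M' ×ˢ closure (C.eps '' T₁)) ⊆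
        Set.image2 C.act V' (closure (C.eps '' T₁)) := by
      rw [Set.image_prod]
      refine Set.image2_subset ?_ subset_rfl
      rintro _ ⟨m, hm, rfl⟩
      exact hMsub hm
    exact hsub1.trans (hcls.trans hfin)
  · -- act v x ∈ O
    have hone : ∀ z ∈ closure (C.eps '' T₁), H (C.act v z) = 1 := by
      refine fun z hz => closure_minimal ?_
        (isClosed_eq (Hc.comp (C.act_cont v)) continuous_const) hz
      rintro _ ⟨t, ht, rfl⟩
      show H (C.act v (C.eps t)) = 1
      rw [C.act_eps, Heps]
      have : v⁻¹ * (v * t) = t := by group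
      rw [this]
      refine h1 t ?_
      have := Set.mul_mem_mul hV₂1 ht
      rwa [one_mul] at this
    show H (C.act v x) ≠ 0
    rw [hone x hx]
    exact one_ne_zero

/-- Basis lemma: basic clopen sets `closure ε(T₁)` form a neighbourhood basis inside
`closure ε(T)`. -/
theorem GComp.basisK {T : Set G} {x : X} {O : Set X} (hO : IsOpen O)
    (hx : x ∈ closure (C.eps '' T)) (hxO : x ∈ O) :
    ∃ T₁ ⊆ T, x ∈ closure (C.eps '' T₁) ∧ closure (C.eps '' T₁) ⊆ O := by
  set K := closure (C.eps '' T) with hK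
  have hDclosed : IsClosed (K \ O) := isClosed_closure.sdiff hO
  obtain ⟨f, hf0, hf1, _⟩ := exists_continuous_zero_one_of_isClosed
    isClosed_singleton hDclosed (by
      rw [Set.disjoint_singleton_left]
      exact fun hmem => hmem.2 hxO)
  set T₁ := {t ∈ T | f (C.eps t) < 1/2} with hT₁def
  have hT₁sub : T₁ ⊆ T := fun t ht => ht.1
  have hclsub : closure (C.eps '' T₁) ⊆ K := closure_mono (Set.image_mono hT₁sub)
  have hle : closure (C.eps '' T₁) ⊆ {z | f z ≤ 1/2} := by
    refine closure_minimal ?_ (isClosed_le (map_continuous f) continuous_const)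
    rintro _ ⟨t, ht, rfl⟩
    exact le_of_lt ht.2
  refine ⟨T₁, hT₁sub, ?_, ?_⟩
  · have hsplit : C.eps '' T = C.eps '' T₁ ∪ C.eps '' (T \ T₁) := by
      have hTsplit : T = T₁ ∪ (T \ T₁) := by
        ext t
        constructor
        · intro ht
          by_cases hc : f (C.eps t) < 1/2
          · exact Or.inl ⟨ht, hc⟩
          · exact Or.inr ⟨ht, fun hh => hc hh.2⟩
        · rintro (ht | ht)
          · exact ht.1
          · exact ht.1
      rw [← Set.image_union, ← hTsplit]
    have : x ∈ closure (C.eps '' T₁) ∪ closure (C.eps '' (T \ T₁)) := by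
      rw [← closure_union, ← hsplit]; exact hx
    rcases this with h | h
    · exact h
    · exfalso
      have hge : closure (C.eps '' (T \ T₁)) ⊆ {z | 1/2 ≤ f z} := by
        refine closure_minimal ?_ (isClosed_le continuous_const (map_continuous f))
        rintro _ ⟨t, ht, rfl⟩
        show 1/2 ≤ f (C.eps t)
        by_contra hc
        exact ht.2 ⟨ht.1, lt_of_not_ge hc⟩
      have h2 : (1:ℝ)/2 ≤ f x := hge h
      have h3 : f x = 0 := hf0 rfl
      rw [h3] at h2
      norm_num at h2
  · intro z hz
    have hzK : z ∈ K := hclsub hz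
    by_contra hzO
    have h1' : f z = 1 := hf1 ⟨hzK, hzO⟩
    have h2' : f z ≤ 1/2 := hle hz
    rw [h1'] at h2'
    norm_num at h2'

end Aux3

section Aux4

variable {G : Type*} [TopologicalSpace G] [Group G] [IsTopologicalGroup G] [T2Space G]
    {A : Set (G → ℂ)} {X : Type*} [TopologicalSpace X] [CompactSpace X] [T2Space X]
    (C : GCompactification G A X)

theorem DiscreteCopy.elem_mem {T : Set G} (x : DiscreteCopy T) : x.elem ∈ T :=
  Subtype.prop x

theorem DiscreteCopy.elem_injective {T : Set G} :
    Function.Injective (DiscreteCopy.elem (T := T)) := fun a b h => Subtype.ext h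

/-- Part 1: `closure ε(T)` is homeomorphic to `βT`. -/
theorem GComp.part1 {U : Set G} (hUopen : IsOpen U) (hU1 : (1 : G) ∈ U) {T : Set G}
    (hdisc : ∀ t ∈ T, ∀ t' ∈ T, t ≠ t' → Disjoint (U * ({t} : Set G)) (U * ({t'} : Set G)))
    (hAset : IsASet A T) :
    ∃ h : StoneCech (DiscreteCopy T) ≃ₜ (closure (C.eps '' T) : Set X),
      ∀ t : DiscreteCopy T, (h (stoneCechUnit t) : X) = C.eps t.elem := by
  set K : Set X := closure (C.eps '' T) with hK
  haveI : CompactSpace K := isCompact_iff_compactSpace.mp isClosed_closure.isCompact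
  set f₀ : DiscreteCopy T → K := fun t => ⟨C.eps t.elem, subset_closure ⟨t.elem, t.elem_mem, rfl⟩⟩
    with hf₀
  have hf₀c : Continuous f₀ := continuous_bot
  set g : StoneCech (DiscreteCopy T) → K := stoneCechExtend hf₀c with hg
  have hgc : Continuous g := continuous_stoneCechExtend hf₀c
  have hgu : ∀ t : DiscreteCopy T, g (stoneCechUnit t) = f₀ t := fun t =>
    congrFun (stoneCechExtend_extends hf₀c) t
  -- surjectivity
  have hsurj : Function.Surjective g := by
    have hcl : IsClosed (Set.range g) := (isCompact_range hgc).isClosed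
    have hrange : Set.range f₀ ⊆ Set.range g := by
      rintro _ ⟨t, rfl⟩
      exact ⟨stoneCechUnit t, hgu t⟩
    have hdense : Dense (Set.range f₀) := by
      intro y
      rw [closure_subtype]
      have : (Subtype.val : K → X) '' Set.range f₀ = C.eps '' T := by
        ext z
        constructor
        · rintro ⟨_, ⟨t, rfl⟩, rfl⟩
          exact ⟨t.elem, t.elem_mem, rfl⟩
        · rintro ⟨s, hs, rfl⟩
          exact ⟨f₀ ⟨s, hs⟩, ⟨⟨s, hs⟩, rfl⟩, rfl⟩
      rw [this]
      exact y.2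
    intro y
    have h3 : y ∈ closure (Set.range g) := closure_mono hrange (hdense y)
    rwa [hcl.closure_eq] at h3
  -- injectivity
  have hinj : Function.Injective g := by
    intro x y hxy
    by_contra hne
    obtain ⟨f, hf0, hf1, _⟩ := exists_continuous_zero_one_of_isClosed
      (isClosed_singleton (x := x)) (isClosed_singleton (x := y))
      (Set.disjoint_singleton.mpr hne)
    set S : Set (DiscreteCopy T) := {t | f (stoneCechUnit t) < 1/2} with hS
    have hxS : x ∈ closure (stoneCechUnit '' S) := by
      have hxr : x ∈ closure (Set.range (stoneCechUnit : DiscreteCopy T → _)) :=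
        denseRange_stoneCechUnit x
      have hsplit : Set.range (stoneCechUnit : DiscreteCopy T → _) =
          stoneCechUnit '' S ∪ stoneCechUnit '' Sᶜ := by
        rw [← Set.image_union, Set.union_compl_self, Set.image_univ]
      rw [hsplit, closure_union] at hxr
      rcases hxr with h | h
      · exact h
      · exfalso
        have : closure (stoneCechUnit '' Sᶜ) ⊆ {z | 1/2 ≤ f z} := by
          refine closure_minimal ?_ (isClosed_le continuous_const (map_continuous f))
          rintro _ ⟨t, ht, rfl⟩
          show (1:ℝ)/2 ≤ f (stoneCechUnit t)
          exact le_of_not_gt ht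
        have h2 : (1:ℝ)/2 ≤ f x := this h
        have h3 : f x = 0 := hf0 rfl
        rw [h3] at h2; norm_num at h2
    have hyS : y ∈ closure (stoneCechUnit '' Sᶜ) := by
      have hyr : y ∈ closure (Set.range (stoneCechUnit : DiscreteCopy T → _)) :=
        denseRange_stoneCechUnit y
      have hsplit : Set.range (stoneCechUnit : DiscreteCopy T → _) =
          stoneCechUnit '' S ∪ stoneCechUnit '' Sᶜ := by
        rw [← Set.image_union, Set.union_compl_self, Set.image_univ]
      rw [hsplit, closure_union] at hyr
      rcases hyr with h | h
      · exfalso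
        have : closure (stoneCechUnit '' S) ⊆ {z | f z ≤ 1/2} := by
          refine closure_minimal ?_ (isClosed_le (map_continuous f) continuous_const)
          rintro _ ⟨t, ht, rfl⟩
          show f (stoneCechUnit t) ≤ 1/2
          exact le_of_lt ht
        have h2 : f y ≤ 1/2 := this h
        have h3 : f y = 1 := hf1 rfl
        rw [h3] at h2; norm_num at h2
      · exact h
    -- push to X
    set S₀ : Set G := DiscreteCopy.elem '' S with hS₀
    have hS₀sub : S₀ ⊆ T := by
      rintro _ ⟨t, _, rfl⟩; exact t.elem_mem
    have hvg : Continuous fun z => (g z : X) := continuous_subtype_val.comp hgc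
    have hgx : (g x : X) ∈ closure (C.eps '' S₀) := by
      have h1 : (fun z => (g z : X)) x ∈
          closure ((fun z => (g z : X)) '' (stoneCechUnit '' S)) := by
        apply image_closure_subset_closure_image hvg
        exact Set.mem_image_of_mem _ hxS
      have h2 : (fun z => (g z : X)) '' (stoneCechUnit '' S) = C.eps '' S₀ := by
        rw [← Set.image_comp, hS₀, ← Set.image_comp]
        refine Set.image_congr fun t _ => ?_
        show (g (stoneCechUnit t) : X) = C.eps t.elem
        rw [hgu t]
      rwa [h2] at h1
    have hgy : (g y : X) ∈ closure (C.eps '' (T \ S₀)) := by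
      have h1 : (fun z => (g z : X)) y ∈
          closure ((fun z => (g z : X)) '' (stoneCechUnit '' Sᶜ)) := by
        apply image_closure_subset_closure_image hvg
        exact Set.mem_image_of_mem _ hyS
      have h2 : (fun z => (g z : X)) '' (stoneCechUnit '' Sᶜ) ⊆ C.eps '' (T \ S₀) := by
        rw [← Set.image_comp]
        rintro _ ⟨t, ht, rfl⟩
        refine ⟨t.elem, ⟨t.elem_mem, fun hmem => ?_⟩, by
          show C.eps t.elem = ((fun z => (g z : X)) ∘ stoneCechUnit) t
          show C.eps t.elem = (g (stoneCechUnit t) : X)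
          rw [hgu t]⟩
        obtain ⟨t', ht', helem⟩ := hmem
        exact ht (DiscreteCopy.elem_injective helem ▸ ht')
      exact (closure_mono h2) h1
    have hdisj := GComp.sep_disjoint C hUopen hU1 hdisc hAset hS₀sub
    rw [hxy] at hgx
    exact Set.disjoint_left.mp hdisj hgx hgy
  refine ⟨Continuous.homeoOfEquivCompactToT2
    (f := Equiv.ofBijective g ⟨hinj, hsurj⟩) hgc, fun t => ?_⟩
  show (g (stoneCechUnit t) : X) = C.eps t.elem
  rw [hgu t]

end Aux4

/-- The `𝒜`-Local Structure Theorem: if `T` is a right `U`-uniformly discrete `𝒜`-set then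
`closure(ε(T))` is homeomorphic to the Stone–Čech compactification `βT` of the discrete set `T`
(via the natural map), and for every open neighbourhood `V` of `e` with `closure V ⊆ U` the set
`ε(V)·closure(ε(T))` is open in `G^𝒜` and the natural map `V × closure(ε(T)) → G^𝒜`,
`(v, x) ↦ ε(v)x`, is a homeomorphism onto it. -/
theorem A_local_structure_theorem
    {G : Type*} [TopologicalSpace G] [Group G] [IsTopologicalGroup G]
    [LocallyCompactSpace G] [T2Space G]
    (A : Set (G → ℂ)) {X : Type*} [TopologicalSpace X] [CompactSpace X] [T2Space X]
    (C : GCompactification G A X)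
    (hone : (fun _ : G => (1 : ℂ)) ∈ A)
    (hlinv : ∀ f ∈ A, ∀ s : G, (fun t => f (s * t)) ∈ A)
    (hjc : Continuous fun p : G × X => C.act p.1 p.2)
    (U : Set G) (hUopen : IsOpen U) (hU1 : (1 : G) ∈ U)
    (T : Set G)
    (hdisc : ∀ t ∈ T, ∀ t' ∈ T, t ≠ t' → Disjoint (U * ({t} : Set G)) (U * ({t'} : Set G)))
    (hAset : IsASet A T) :
    (∃ h : StoneCech (DiscreteCopy T) ≃ₜ (closure (C.eps '' T) : Set X),
      ∀ t : DiscreteCopy T, (h (stoneCechUnit t) : X) = C.eps t.elem) ∧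
    ∀ V : Set G, IsOpen V → (1 : G) ∈ V → closure V ⊆ U →
      IsOpen (Set.image2 C.act V (closure (C.eps '' T))) ∧
      ∃ e : ↥V × ↥(closure (C.eps '' T)) ≃ₜ ↥(Set.image2 C.act V (closure (C.eps '' T))),
        ∀ p, (e p : X) = C.act (p.1 : G) (p.2 : X) := by
  constructor
  · exact GComp.part1 C hUopen hU1 hdisc hAset
  intro V hVopen hV1 hVU
  have hVsubU : V ⊆ U := fun v hv => hVU (subset_closure hv)
  set K : Set X := closure (C.eps '' T) with hK
  set Ω : Set X := Set.image2 C.act V K with hΩ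
  have hΩopen : IsOpen Ω := GComp.open2 C hjc hlinv hAset hVopen subset_rfl
  refine ⟨hΩopen, ?_⟩
  -- the natural map
  set Φ : ↥V × ↥K → X := fun p => C.act (p.1 : G) (p.2 : X) with hΦ
  have hΦc : Continuous Φ :=
    hjc.comp ((continuous_subtype_val.comp continuous_fst).prodMk
      (continuous_subtype_val.comp continuous_snd))
  have hΦmem : ∀ p : ↥V × ↥K, Φ p ∈ Ω := fun p =>
    Set.mem_image2_of_mem p.1.2 p.2.2
  set f : ↥V × ↥K → ↥Ω := fun p => ⟨Φ p, hΦmem p⟩ with hf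
  have hfc : Continuous f := hΦc.subtype_mk _
  -- injectivity
  have hinj : Function.Injective f := by
    rintro ⟨⟨v, hv⟩, ⟨x, hx⟩⟩ ⟨⟨v', hv'⟩, ⟨x', hx'⟩⟩ hfeq
    have heq : C.act v x = C.act v' x' := congrArg Subtype.val hfeq
    have hx'eq : C.act (v'⁻¹ * v) x = x' := by
      rw [C.act_mul]
      rw [heq, ← C.act_mul, inv_mul_cancel, GComp.act_one]
    have hw : v'⁻¹ * v = 1 := by
      refine GComp.key C hUopen hU1 hdisc hAset (hVsubU hv') (hVsubU hv) hx ?_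
      rw [hx'eq]; exact hx'
    have hxx : x = x' := by
      rw [← hx'eq, hw, GComp.act_one]
    have hvv : v' = v := inv_mul_eq_one.mp hw
    subst hvv
    exact Prod.ext (Subtype.ext rfl) (Subtype.ext hxx)
  -- surjectivity
  have hsurj : Function.Surjective f := by
    rintro ⟨z, hz⟩
    obtain ⟨v, hv, x, hx, rfl⟩ := hz
    exact ⟨(⟨v, hv⟩, ⟨x, hx⟩), rfl⟩
  -- open map into X
  have hΦopen : ∀ O : Set (↥V × ↥K), IsOpen O → IsOpen (Φ '' O) := by
    intro O hO
    rw [isOpen_iff_forall_mem_open]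
    rintro _ ⟨p, hp, rfl⟩
    obtain ⟨⟨v, hv⟩, ⟨x, hx⟩⟩ := p
    obtain ⟨P, Q, hPopen, hPmem, hQopen, hQmem, hPQ⟩ :=
      mem_nhds_prod_iff'.mp (hO.mem_nhds hp)
    obtain ⟨V₁, hV₁open, hV₁eq⟩ := isOpen_induced_iff.mp hPopen
    obtain ⟨O₁, hO₁open, hO₁eq⟩ := isOpen_induced_iff.mp hQopen
    -- x ∈ O₁, v ∈ V₁
    have hvV₁ : v ∈ V₁ := by
      have : (⟨v, hv⟩ : ↥V) ∈ P := hPmem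
      rw [← hV₁eq] at this; exact this
    have hxO₁ : x ∈ O₁ := by
      have : (⟨x, hx⟩ : ↥K) ∈ Q := hQmem
      rw [← hO₁eq] at this; exact this
    obtain ⟨T₁, hT₁sub, hxT₁, hT₁O₁⟩ := GComp.basisK C hO₁open hx hxO₁
    refine ⟨Set.image2 C.act (V₁ ∩ V) (closure (C.eps '' T₁)), ?_,
      GComp.open2 C hjc hlinv hAset (hV₁open.inter hVopen) hT₁sub, ?_⟩
    · rintro _ ⟨v', hv', x', hx', rfl⟩
      have hx'K : x' ∈ K := closure_mono (Set.image_mono hT₁sub) hx'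
      refine ⟨(⟨v', hv'.2⟩, ⟨x', hx'K⟩), hPQ ⟨?_, ?_⟩, rfl⟩
      · rw [← hV₁eq]; exact hv'.1
      · rw [← hO₁eq]; exact hT₁O₁ hx'
    · exact Set.mem_image2_of_mem ⟨hvV₁, hv⟩ hxT₁
  have hfopen : IsOpenMap f := by
    intro O hO
    have himg : f '' O = Subtype.val ⁻¹' (Φ '' O) := by
      ext z
      constructor
      · rintro ⟨p, hp, rfl⟩
        exact ⟨p, hp, rfl⟩
      · rintro ⟨p, hp, hpz⟩
        exact ⟨p, hp, Subtype.ext hpz⟩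
    rw [himg]
    exact (hΦopen O hO).preimage continuous_subtype_val
  refine ⟨Equiv.toHomeomorphOfContinuousOpen
    (Equiv.ofBijective f ⟨hinj, hsurj⟩) hfc hfopen, fun p => rfl⟩
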